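/- There exists a constant C > 0 such that for every T ∈ (0, 1] and every τ ∈ ℝ, ∫₀^T | ∫_{t'}^T e^{−i t τ} dt |² dt' ≤ C · T · min(T, ⟨τ⟩^{−1})². -/

import Mathlib

open MeasureTheory Real

noncomputable def jpn (x : ℝ) : ℝ := Real.sqrt (1 + x ^ 2)

lemma jpn_pos (x : ℝ) : 0 < jpn x := Real.sqrt_pos.2 (by positivity)

lemma norm_exp_one (t τ : ℝ) : ‖Complex.exp (-Complex.I * (t : ℂ) * (τ : ℂ))‖ = 1 := by
  rw [Complex.norm_exp]
  have : (-Complex.I * (t : ℂ) * (τ : ℂ)).re = 0 := by simp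
  rw [this, Real.exp_zero]

lemma inner_bound (T τ : ℝ) (hT0 : 0 < T) (hT1 : T ≤ 1) (t' : ℝ) (h1 : 0 ≤ t') (h2 : t' ≤ T) :
    ‖∫ t in t'..T, Complex.exp (-Complex.I * (t : ℂ) * (τ : ℂ))‖ ≤ 3 * min T (jpn τ)⁻¹ := by
  have hbT : ‖∫ t in t'..T, Complex.exp (-Complex.I * (t : ℂ) * (τ : ℂ))‖ ≤ T := by
    have := intervalIntegral.norm_integral_le_of_norm_le_const
      (C := 1) (a := t') (b := T)
      (f := fun t => Complex.exp (-Complex.I * (t : ℂ) * (τ : ℂ)))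
      (fun x _ => le_of_eq (norm_exp_one x τ))
    calc ‖∫ t in t'..T, Complex.exp (-Complex.I * (t : ℂ) * (τ : ℂ))‖
        ≤ 1 * |T - t'| := this
      _ ≤ T := by rw [one_mul, abs_of_nonneg (by linarith)]; linarith
  rcases le_or_gt T (jpn τ)⁻¹ with h | h
  · rw [min_eq_left h]; linarith
  · rw [min_eq_right h.le]
    rcases le_or_gt |τ| 1 with hτ | hτ
    · -- jpn τ ≤ √2 ≤ 3, so T ≤ 1 ≤ 3 / jpn τ
      have hj : jpn τ ≤ 3 := by
        have : (1 : ℝ) + τ ^ 2 ≤ 9 := by nlinarith [abs_nonneg τ, sq_abs τ]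
        calc jpn τ ≤ Real.sqrt 9 := Real.sqrt_le_sqrt this
          _ = 3 := by rw [show (9:ℝ) = 3^2 by norm_num, Real.sqrt_sq (by norm_num)]
      have : T ≤ 3 * (jpn τ)⁻¹ := by
        rw [← div_eq_mul_inv, le_div_iff₀ (jpn_pos τ)]
        nlinarith [jpn_pos τ]
      linarith
    · -- |τ| > 1
      have hτ0 : τ ≠ 0 := by intro h0; rw [h0] at hτ; simp at hτ; linarith
      have hc : (-Complex.I * (τ : ℂ)) ≠ 0 := by
        simp [Complex.ext_iff, hτ0]
      have hform : (∫ t in t'..T, Complex.exp (-Complex.I * (t : ℂ) * (τ : ℂ)))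
          = (Complex.exp (-Complex.I * (τ:ℂ) * T) - Complex.exp (-Complex.I * (τ:ℂ) * t'))
            / (-Complex.I * (τ:ℂ)) := by
        rw [show (fun t : ℝ => Complex.exp (-Complex.I * (t : ℂ) * (τ : ℂ)))
            = fun t : ℝ => Complex.exp ((-Complex.I * (τ:ℂ)) * (t:ℂ)) by
          funext t; ring_nf]
        exact integral_exp_mul_complex hc
      have hnormc : ‖(-Complex.I * (τ:ℂ))‖ = |τ| := by
        simp
      have hb2 : ‖∫ t in t'..T, Complex.exp (-Complex.I * (t : ℂ) * (τ : ℂ))‖ ≤ 2 / |τ| := by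
        rw [hform, norm_div, hnormc]
        gcongr
        calc ‖Complex.exp (-Complex.I * (τ:ℂ) * T) - Complex.exp (-Complex.I * (τ:ℂ) * t')‖
            ≤ ‖Complex.exp (-Complex.I * (τ:ℂ) * T)‖ + ‖Complex.exp (-Complex.I * (τ:ℂ) * t')‖ :=
              norm_sub_le _ _
          _ ≤ 2 := by
            have e1 := norm_exp_one T τ
            have e2 := norm_exp_one t' τ
            have r1 : -Complex.I * (τ:ℂ) * T = -Complex.I * (T:ℂ) * τ := by ring
            have r2 : -Complex.I * (τ:ℂ) * t' = -Complex.I * (t':ℂ) * τ := by ring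
            rw [r1, r2, e1, e2]; norm_num
      have hj : jpn τ ≤ (3/2) * |τ| := by
        have h9 : (1:ℝ) + τ^2 ≤ ((3/2) * |τ|)^2 := by nlinarith [sq_abs τ]
        calc jpn τ ≤ Real.sqrt (((3/2) * |τ|)^2) := Real.sqrt_le_sqrt h9
          _ = (3/2) * |τ| := Real.sqrt_sq (by positivity)
      have hτpos : (0:ℝ) < |τ| := abs_pos.2 hτ0
      have : 2 / |τ| ≤ 3 * (jpn τ)⁻¹ := by
        rw [← div_eq_mul_inv, div_le_div_iff₀ hτpos (jpn_pos τ)]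
        nlinarith [jpn_pos τ]
      linarith

/-- Key bound in the stochastic convolution estimate: uniformly in `T ∈ (0,1]` and `τ ∈ ℝ`,
`∫₀^T |∫_{t'}^T e^{-itτ} dt|² dt' ≤ C T min(T, ⟨τ⟩⁻¹)²`. -/
theorem stochastic_convolution_time_bound :
    ∃ C : ℝ, 0 < C ∧ ∀ T : ℝ, 0 < T → T ≤ 1 → ∀ τ : ℝ,
      (∫ t' in (0 : ℝ)..T,
          ‖∫ t in t'..T, Complex.exp (-Complex.I * (t : ℂ) * (τ : ℂ))‖ ^ 2)
        ≤ C * T * min T (jpn τ)⁻¹ ^ 2 := by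
  refine ⟨9, by norm_num, fun T hT0 hT1 τ => ?_⟩
  set m := min T (jpn τ)⁻¹ with hm
  have hm0 : 0 ≤ m := le_min hT0.le (inv_nonneg.2 (jpn_pos τ).le)
  have key : ∀ x ∈ Set.uIoc (0:ℝ) T,
      ‖‖∫ t in x..T, Complex.exp (-Complex.I * (t : ℂ) * (τ : ℂ))‖ ^ 2‖ ≤ 9 * m ^ 2 := by
    intro x hx
    rw [Set.uIoc_of_le hT0.le] at hx
    have hb := inner_bound T τ hT0 hT1 x hx.1.le hx.2
    have hnn : (0:ℝ) ≤ ‖∫ t in x..T, Complex.exp (-Complex.I * (t : ℂ) * (τ : ℂ))‖ := norm_nonneg _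
    rw [Real.norm_eq_abs, abs_of_nonneg (by positivity)]
    nlinarith
  have := intervalIntegral.norm_integral_le_of_norm_le_const key
  calc (∫ t' in (0:ℝ)..T, ‖∫ t in t'..T, Complex.exp (-Complex.I * (t : ℂ) * (τ : ℂ))‖ ^ 2)
      ≤ ‖∫ t' in (0:ℝ)..T, ‖∫ t in t'..T, Complex.exp (-Complex.I * (t : ℂ) * (τ : ℂ))‖ ^ 2‖ :=
        le_abs_self _
    _ ≤ 9 * m ^ 2 * |T - 0| := this
    _ = 9 * T * m ^ 2 := by rw [sub_zero, abs_of_pos hT0]; ring
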